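/- Let p be an odd prime and r ≥ 1. Then sum_{k=0}^{(p^r-1)/2} (4k+3)/(16(k+1)^4 · 256^k) · binom(2k,k)^4 ≡ 1 - 5p^{4r} (mod p^{4r+1}), as a congruence of p-adic integers (each summand is a p-adic integer since binom(2k,k)^4/((k+1)^4 256^k) ∈ ℤ_p for k in the range). -/

import Mathlib

section helpers
lemma choose_mod (p : ℕ) [hp : Fact p.Prime] (r : ℕ) (hr : 1 ≤ r) (j : ℕ) (hj : j ≤ p^r - 1) :
    ((Nat.choose (p^r - 1) j : ZMod p)) = (-1)^j := by
  have hpr : 2 ≤ p^r := le_trans hp.out.two_le (Nat.le_self_pow (by omega) p)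
  induction j with
  | zero => simp
  | succ j ih =>
    have pas : Nat.choose (p^r) (j+1) = Nat.choose (p^r -1) j + Nat.choose (p^r-1) (j+1) := by
      conv_lhs => rw [show p^r = (p^r - 1) + 1 by omega]
      rw [Nat.choose_succ_succ']
    have hdvd : p ∣ Nat.choose (p^r) (j+1) :=
      Nat.Prime.dvd_choose_pow hp.out (by omega) (by omega)
    have h0 : ((Nat.choose (p^r) (j+1) : ZMod p)) = 0 :=
      (ZMod.natCast_eq_zero_iff _ _).2 hdvd
    rw [pas] at h0; push_cast at h0
    rw [ih (by omega)] at h0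
    have : ((Nat.choose (p^r-1) (j+1) : ZMod p)) = -(-1)^j := by linear_combination h0
    rw [this]; ring

lemma isUnit_nat (p : ℕ) [hp : Fact p.Prime] (n : ℕ) (h : ¬ p ∣ n) : IsUnit ((n : ℤ_[p])) := by
  rw [PadicInt.isUnit_iff]
  refine le_antisymm (PadicInt.norm_le_one _) ?_
  by_contra hlt
  push_neg at hlt
  rw [PadicInt.norm_lt_one_iff_dvd] at hlt
  obtain ⟨c, hc⟩ := hlt
  apply h
  have : (PadicInt.toZMod (n : ℤ_[p]) : ZMod p) = 0 := by
    rw [hc, map_mul, map_natCast, ZMod.natCast_self, zero_mul]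
  rw [map_natCast] at this
  exact (ZMod.natCast_eq_zero_iff _ _).1 this

lemma dvd_of_toZMod_eq_zero (p : ℕ) [hp : Fact p.Prime] (x : ℤ_[p])
    (h : PadicInt.toZMod x = 0) : (p : ℤ_[p]) ∣ x := by
  have : x ∈ RingHom.ker (PadicInt.toZMod : ℤ_[p] →+* ZMod p) := h
  rw [PadicInt.ker_toZMod, PadicInt.maximalIdeal_eq_span_p, Ideal.mem_span_singleton] at this
  exact this

lemma alg {K : Type*} [Field K] [CharZero K] (n C c P : K) (hn : n + 1 ≠ 0) (hP : P ≠ 0)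
    (h4 : (n+1)^4 * c^4 = 16 * (2*n+1)^4 * C^4) :
    1 - (8*n^2 + 4*n + 1) * C^4 / P + (4*n+3) * C^4 / (16 * (n+1)^4 * P)
      = 1 - (8*(n+1)^2 + 4*(n+1) + 1) * c^4 / (256 * P) := by
  have h4' : (n+1)^4 ≠ 0 := pow_ne_zero _ hn
  field_simp
  linear_combination (16 * (8*n^2 + 20*n + 13)) * h4

lemma tele (p : ℕ) [Fact p.Prime] (n : ℕ) :
    ∑ k ∈ Finset.range n,
        (4 * (k : ℚ_[p]) + 3) * (Nat.centralBinom k : ℚ_[p]) ^ 4 /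
          (16 * ((k : ℚ_[p]) + 1) ^ 4 * 256 ^ k)
      = 1 - (8 * (n:ℚ_[p])^2 + 4*(n:ℚ_[p]) + 1) * (Nat.centralBinom n : ℚ_[p])^4 / 256 ^ n := by
  induction n with
  | zero => simp [Nat.centralBinom]
  | succ n ih =>
    rw [Finset.sum_range_succ, ih]
    have hC : ((n:ℚ_[p]) + 1) * (Nat.centralBinom (n+1) : ℚ_[p])
        = 2 * (2 * (n:ℚ_[p]) + 1) * (Nat.centralBinom n : ℚ_[p]) := by
      exact_mod_cast congrArg (Nat.cast : ℕ → ℚ_[p]) (Nat.succ_mul_centralBinom_succ n)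
    have h4 : ((n:ℚ_[p])+1)^4 * (Nat.centralBinom (n+1) : ℚ_[p])^4
        = 16 * (2*(n:ℚ_[p])+1)^4 * (Nat.centralBinom n : ℚ_[p])^4 := by
      have := congrArg (· ^ 4) hC
      simp only [mul_pow] at this
      linear_combination this
    have hn : ((n:ℚ_[p]) + 1) ≠ 0 := Nat.cast_add_one_ne_zero n
    have hP : ((256:ℚ_[p]))^n ≠ 0 := pow_ne_zero _ (by norm_num)
    have h := alg ((n:ℚ_[p])) _ _ _ hn hP h4
    push_cast
    rw [h]
    ring
end helpers

theorem supercongruence_padic_quartic_half (p : ℕ) [Fact p.Prime] (hp : Odd p)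
    (r : ℕ) (hr : 1 ≤ r) :
    ∃ c : ℤ_[p],
      ∑ k ∈ Finset.range ((p ^ r - 1) / 2 + 1),
          (4 * (k : ℚ_[p]) + 3) * (Nat.centralBinom k : ℚ_[p]) ^ 4 /
            (16 * ((k : ℚ_[p]) + 1) ^ 4 * 256 ^ k)
        = ((1 - 5 * (p : ℤ_[p]) ^ (4 * r) + (p : ℤ_[p]) ^ (4 * r + 1) * c : ℤ_[p]) : ℚ_[p]) := by
  have hprime : p.Prime := Fact.out
  obtain ⟨m, hm⟩ : ∃ m, p ^ r = 2 * m + 1 := by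
    obtain ⟨m, hm'⟩ := hp.pow (n := r)
    exact ⟨m, by omega⟩
  have hp2 : p ≠ 2 := by rintro rfl; have := Nat.odd_iff.1 hp; omega
  have hppos : 2 ≤ p := hprime.two_le
  have hpr2 : 2 ≤ p ^ r := le_trans hppos (Nat.le_self_pow (by omega) p)
  have hidx : (p ^ r - 1) / 2 = m := by omega
  rw [hidx, tele p (m+1)]
  -- notation
  set C : ℕ := Nat.centralBinom (m+1) with hCdef
  set B : ℕ := Nat.centralBinom m with hBdef
  -- units
  have hpm : ¬ p ∣ (m+1) := by
    intro hd
    have h2 : p ∣ 2*(m+1) := hd.mul_left 2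
    rw [show 2*(m+1) = p^r + 1 by omega] at h2
    have h1 := Nat.dvd_sub h2 (dvd_pow_self p (show r ≠ 0 by omega))
    rw [Nat.add_sub_cancel_left] at h1
    exact hprime.one_lt.ne' (Nat.dvd_one.1 h1)
  have hp256 : ¬ p ∣ 256^(m+1) := by
    intro hd
    have h2 : p ∣ 2 := by
      have := hprime.dvd_of_dvd_pow hd
      have : p ∣ 2^8 := by norm_num at this ⊢; exact this
      exact hprime.dvd_of_dvd_pow this
    exact hp2 ((Nat.prime_dvd_prime_iff_eq hprime Nat.prime_two).1 h2)
  obtain ⟨U, hU⟩ := isUnit_nat p (m+1) hpm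
  obtain ⟨V, hV⟩ := isUnit_nat p (256^(m+1)) hp256
  set u : ℤ_[p] := ((U⁻¹ : ℤ_[p]ˣ) : ℤ_[p]) with hudef
  set v : ℤ_[p] := ((V⁻¹ : ℤ_[p]ˣ) : ℤ_[p]) with hvdef
  have hu : u * ((m+1 : ℕ) : ℤ_[p]) = 1 := by rw [← hU]; exact U.inv_mul
  have hv : v * (256 : ℤ_[p])^(m+1) = 1 := by
    have : ((256^(m+1) : ℕ) : ℤ_[p]) = (256:ℤ_[p])^(m+1) := by push_cast; ring
    rw [← this, ← hV]; exact V.inv_mul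
  -- central binomial relation in ℤ_p
  have hNC : (m+1) * C = 2 * p^r * B := by
    rw [hm]; exact Nat.succ_mul_centralBinom_succ m
  have h1 : ((m+1:ℕ) : ℤ_[p]) * (C : ℤ_[p]) = 2 * (p:ℤ_[p])^r * (B : ℤ_[p]) := by
    exact_mod_cast congrArg (Nat.cast : ℕ → ℤ_[p]) hNC
  have hCeq : (C : ℤ_[p]) = 2 * (p:ℤ_[p])^r * (B:ℤ_[p]) * u := by
    linear_combination u * h1 - (C:ℤ_[p]) * hu
  set K : ℤ_[p] := ((8*(m+1)^2+4*(m+1)+1 : ℕ) : ℤ_[p]) * 16 * (B:ℤ_[p])^4 * u^4 * v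
    with hKdef
  have hZ : (p:ℤ_[p])^(4*r) * K * 256^(m+1)
      = ((8*(m+1)^2+4*(m+1)+1:ℕ):ℤ_[p]) * (C:ℤ_[p])^4 := by
    rw [hCeq, hKdef]
    linear_combination ((p:ℤ_[p])^(4*r) * ((8*(m+1)^2+4*(m+1)+1:ℕ):ℤ_[p]) * 16
      * (B:ℤ_[p])^4 * u^4) * hv
  -- mod p computation
  have hK5 : PadicInt.toZMod K = 5 := by
    have hu' : (PadicInt.toZMod u) * ((m+1:ℕ) : ZMod p) = 1 := by
      have := congrArg PadicInt.toZMod hu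
      simpa [map_mul, map_natCast] using this
    have hv' : (PadicInt.toZMod v) * (256 : ZMod p)^(m+1) = 1 := by
      have := congrArg PadicInt.toZMod hv
      simpa [map_mul, map_pow, map_ofNat] using this
    have h2a : (2 : ZMod p) * ((m+1:ℕ) : ZMod p) = 1 := by
      have e : 2*(m+1) = p^r+1 := by omega
      have h := congrArg (Nat.cast : ℕ → ZMod p) e
      push_cast at h
      rw [ZMod.natCast_self, zero_pow (by omega : r ≠ 0)] at h
      push_cast
      linear_combination h
    have h2ne : (2 : ZMod p) ≠ 0 := by
      intro h
      have h2 : ((2:ℕ) : ZMod p) = 0 := by exact_mod_cast h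
      have := (ZMod.natCast_eq_zero_iff 2 p).1 h2
      exact hp2 ((Nat.prime_dvd_prime_iff_eq hprime Nat.prime_two).1 this)
    have h256m : (256 : ZMod p)^m = 1 := by
      have e8 : 8*m+4 = p^r*4 := by omega
      have key : (2:ZMod p)^(8*m) * 2^4 = 2^4 := by
        rw [← pow_add, e8, pow_mul, ZMod.pow_card_pow]
      have h2561 : (256:ZMod p) = 2^8 := by norm_num
      have h2 : (256:ZMod p)^m = (2:ZMod p)^(8*m) := by rw [h2561, ← pow_mul]
      rw [h2]
      have h16 : ((2:ZMod p)^4) ≠ 0 := pow_ne_zero _ h2ne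
      exact mul_right_cancel₀ h16 (by rw [key, one_mul])
    have hv2 : (PadicInt.toZMod v) * 256 = 1 := by
      have h2 : (256:ZMod p)^(m+1) = 256 := by rw [pow_succ, h256m, one_mul]
      rw [h2] at hv'; exact hv'
    have hφu : PadicInt.toZMod u = 2 := by
      linear_combination 2*hu' - (PadicInt.toZMod u) * h2a
    have hB4 : ((B:ℕ) : ZMod p) = (-1)^m := by
      rw [hBdef, Nat.centralBinom_eq_two_mul_choose, show 2*m = p^r - 1 by omega]
      exact choose_mod p r hr m (by omega)
    have hnn : ((8*(m+1)^2+4*(m+1)+1 : ℕ) : ZMod p) = 5 := by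
      have h2a' := h2a
      push_cast at h2a' ⊢
      linear_combination ((4:ZMod p)*((m:ZMod p)+1) + 4) * h2a'
    have hm4 : ((-1 : ZMod p)^m)^4 = 1 := by
      rw [← pow_mul]
      exact Even.neg_one_pow ⟨2*m, by ring⟩
    rw [hKdef]
    simp only [map_mul, map_pow, map_natCast, map_ofNat]
    rw [hB4, hφu, hnn, hm4]
    linear_combination (5:ZMod p)*hv2
  have hdvd : (p:ℤ_[p]) ∣ (K - 5) := by
    apply dvd_of_toZMod_eq_zero
    rw [map_sub, hK5, map_ofNat, sub_self]
  obtain ⟨d, hd⟩ := hdvd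
  refine ⟨-d, ?_⟩
  have hZQ : (p:ℚ_[p])^(4*r) * ((K:ℤ_[p]):ℚ_[p]) * 256^(m+1)
      = (8*((m:ℚ_[p])+1)^2 + 4*((m:ℚ_[p])+1) + 1) * ((C:ℕ):ℚ_[p])^4 := by
    exact_mod_cast congrArg (fun z : ℤ_[p] => (z : ℚ_[p])) hZ
  have hdQ : ((K:ℤ_[p]):ℚ_[p]) - 5 = (p:ℚ_[p]) * ((d:ℤ_[p]):ℚ_[p]) := by
    exact_mod_cast congrArg (fun z : ℤ_[p] => (z : ℚ_[p])) hd
  push_cast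
  simp only [show ((5:ℤ_[p]):ℚ_[p]) = 5 from rfl]
  have h256Q : ((256:ℚ_[p]))^(m+1) ≠ 0 := pow_ne_zero _ (by norm_num)
  field_simp
  linear_combination hZQ - 256^(m+1)*(p:ℚ_[p])^(4*r)*hdQ
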